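/- Sublinear convergence of the proximal gradient algorithm: assume W has at least one nonzero entry and define L_x = (max over observed entries of X minus min over observed entries of X)^2, L_w = max_j (Σ_i W_{ij})/n1 + max_i (Σ_j W_{ij})/n2, and L_f = L_x L_w / 2. Let μ > L_f, let M_0 satisfy ‖M_0‖_∞ ≤ α, define M_{k+1} = S_{λ/μ,α}(M_k − ∇L(M_k)/μ) and F_k = L(M_k) + λ‖M_k‖_*, and let M̂ be a minimizer of F(M) = L(M) + λ‖M‖_* over {M : ‖M‖_∞ ≤ α}. Then every accumulation point of the sequence {M_k} is a minimizer of F over {M : ‖M‖_∞ ≤ α}, and for every k ≥ 1, F_k − F(M̂) ≤ μ ‖M_0 − M̂‖_F² / (2k). -/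

import Mathlib

open scoped BigOperators Classical
open MeasureTheory ProbabilityTheory Matrix

noncomputable section


namespace NMCAux
set_option linter.unusedSectionVars false


/-- scalar loss -/
def phi (c s : ℝ) : ℝ := Real.log (1 + Real.exp (-(c * s)))

def psi (c s : ℝ) : ℝ := -(c * Real.exp (-(c * s))) / (1 + Real.exp (-(c * s)))

def phi2 (c s : ℝ) : ℝ := c ^ 2 * Real.exp (-(c * s)) / (1 + Real.exp (-(c * s))) ^ 2

lemma one_add_exp_pos (x : ℝ) : 0 < 1 + Real.exp x := by positivity

lemma hasDerivAt_phi (c s : ℝ) : HasDerivAt (phi c) (psi c s) s := by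
  have h1 : HasDerivAt (fun s : ℝ => -(c * s)) (-c) s := by
    simpa using ((hasDerivAt_id s).const_mul c).fun_neg
  have h2 : HasDerivAt (fun s : ℝ => 1 + Real.exp (-(c * s)))
      (Real.exp (-(c * s)) * (-c)) s := (h1.exp).const_add 1
  have h3 := h2.log (ne_of_gt (one_add_exp_pos _))
  refine h3.congr_deriv ?_
  unfold psi; ring

lemma hasDerivAt_psi (c s : ℝ) : HasDerivAt (psi c) (phi2 c s) s := by
  have h1 : HasDerivAt (fun s : ℝ => -(c * s)) (-c) s := by
    simpa using ((hasDerivAt_id s).const_mul c).fun_neg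
  have hE : HasDerivAt (fun s : ℝ => Real.exp (-(c * s)))
      (Real.exp (-(c * s)) * (-c)) s := h1.exp
  have hnum : HasDerivAt (fun s : ℝ => -(c * Real.exp (-(c * s))))
      (-(c * (Real.exp (-(c * s)) * (-c)))) s := (hE.const_mul c).neg
  have hden : HasDerivAt (fun s : ℝ => 1 + Real.exp (-(c * s)))
      (Real.exp (-(c * s)) * (-c)) s := hE.const_add 1
  have h := hnum.div hden (ne_of_gt (one_add_exp_pos _))
  refine h.congr_deriv ?_
  unfold phi2
  field_simp
  ring

lemma phi2_nonneg (c s : ℝ) : 0 ≤ phi2 c s := by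
  unfold phi2; positivity

lemma phi2_le (c s : ℝ) : phi2 c s ≤ c ^ 2 / 4 := by
  unfold phi2
  rw [div_le_div_iff₀ (by positivity) (by norm_num)]
  have hE : 0 ≤ Real.exp (-(c * s)) := (Real.exp_pos _).le
  nlinarith [sq_nonneg (1 - Real.exp (-(c * s))), sq_nonneg c,
    mul_nonneg (sq_nonneg c) (sq_nonneg (1 - Real.exp (-(c * s))))]

/-- psi is monotone. -/
lemma psi_mono (c : ℝ) {a b : ℝ} (hab : a ≤ b) : psi c a ≤ psi c b := by
  rcases eq_or_lt_of_le hab with rfl | h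
  · exact le_rfl
  · obtain ⟨ξ, _, hξ⟩ := exists_hasDerivAt_eq_slope (psi c) (phi2 c) h
      (fun x _ => (hasDerivAt_psi c x).continuousAt.continuousWithinAt)
      (fun x _ => hasDerivAt_psi c x)
    rw [eq_div_iff (sub_ne_zero.mpr h.ne')] at hξ
    nlinarith [phi2_nonneg c ξ]

lemma psi_lip (c : ℝ) {a b : ℝ} (hab : a ≤ b) : psi c b - psi c a ≤ c ^ 2 / 4 * (b - a) := by
  rcases eq_or_lt_of_le hab with rfl | h
  · simp
  · obtain ⟨ξ, _, hξ⟩ := exists_hasDerivAt_eq_slope (psi c) (phi2 c) h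
      (fun x _ => (hasDerivAt_psi c x).continuousAt.continuousWithinAt)
      (fun x _ => hasDerivAt_psi c x)
    rw [eq_div_iff (sub_ne_zero.mpr h.ne')] at hξ
    nlinarith [phi2_le c ξ]

/-- first-order lower bound (convexity). -/
lemma phi_taylor_lower (c x y : ℝ) : phi c x + psi c x * (y - x) ≤ phi c y := by
  rcases lt_trichotomy x y with h | rfl | h
  · obtain ⟨ξ, hmem, hξ⟩ := exists_hasDerivAt_eq_slope (phi c) (psi c) h
      (fun z _ => (hasDerivAt_phi c z).continuousAt.continuousWithinAt)
      (fun z _ => hasDerivAt_phi c z)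
    rw [eq_div_iff (sub_ne_zero.mpr h.ne')] at hξ
    have := psi_mono c (le_of_lt hmem.1)
    nlinarith
  · simp
  · obtain ⟨ξ, hmem, hξ⟩ := exists_hasDerivAt_eq_slope (phi c) (psi c) h
      (fun z _ => (hasDerivAt_phi c z).continuousAt.continuousWithinAt)
      (fun z _ => hasDerivAt_phi c z)
    rw [eq_div_iff (sub_ne_zero.mpr h.ne')] at hξ
    have := psi_mono c (le_of_lt hmem.2)
    nlinarith

/-- second-order upper bound. -/
lemma phi_taylor_upper (c x y : ℝ) :
    phi c y ≤ phi c x + psi c x * (y - x) + c ^ 2 / 8 * (y - x) ^ 2 := by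
  set d := y - x with hd
  -- h(t) = φ x + t ψ x d + c²/8 t² d² − φ(x+td)
  set h : ℝ → ℝ := fun t => phi c x + t * (psi c x * d) + c ^ 2 / 8 * t ^ 2 * d ^ 2
      - phi c (x + t * d) with hh
  have hderiv : ∀ t : ℝ, HasDerivAt h
      (psi c x * d + c ^ 2 / 4 * t * d ^ 2 - psi c (x + t * d) * d) t := by
    intro t
    have h1 : HasDerivAt (fun t : ℝ => x + t * d) d t := by
      simpa using ((hasDerivAt_id t).mul_const d).const_add x
    have h2 : HasDerivAt (fun t : ℝ => phi c (x + t * d)) (psi c (x + t * d) * d) t :=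
      by have := (hasDerivAt_phi c (x + t * d)).comp t h1; exact this
    have h3 : HasDerivAt (fun t : ℝ => phi c x + t * (psi c x * d) + c ^ 2 / 8 * t ^ 2 * d ^ 2)
        (psi c x * d + c ^ 2 / 4 * t * d ^ 2) t := by
      have ha : HasDerivAt (fun t : ℝ => t * (psi c x * d)) (psi c x * d) t := by
        simpa using (hasDerivAt_id t).mul_const (psi c x * d)
      have hb : HasDerivAt (fun t : ℝ => c ^ 2 / 8 * t ^ 2 * d ^ 2)
          (c ^ 2 / 4 * t * d ^ 2) t := by
        have : HasDerivAt (fun t : ℝ => t ^ 2) (2 * t) t := by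
          simpa using hasDerivAt_pow 2 t
        have := (this.const_mul (c ^ 2 / 8)).mul_const (d ^ 2)
        exact this.congr_deriv (by ring)
      simpa using ((ha.const_add (phi c x)).fun_add hb)
    simpa using h3.fun_sub h2
  have hd' : ∀ t ∈ Set.Ioo (0:ℝ) 1, 0 ≤ psi c x * d + c ^ 2 / 4 * t * d ^ 2 - psi c (x + t * d) * d := by
    intro t ht
    rcases le_or_gt 0 d with hdp | hdn
    · have hle : x ≤ x + t * d := by nlinarith [ht.1.le]
      have := psi_lip c hle
      have h4 : psi c (x + t * d) - psi c x ≤ c ^ 2 / 4 * (t * d) := by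
        simpa using this
      nlinarith
    · have hle : x + t * d ≤ x := by nlinarith [ht.1.le]
      have := psi_lip c hle
      have h4 : psi c x - psi c (x + t * d) ≤ c ^ 2 / 4 * (-(t * d)) := by
        convert this using 2; ring
      nlinarith
  obtain ⟨ξ, hmem, hξ⟩ := exists_hasDerivAt_eq_slope h
      (fun t => psi c x * d + c ^ 2 / 4 * t * d ^ 2 - psi c (x + t * d) * d) one_pos
      (fun t _ => (hderiv t).continuousAt.continuousWithinAt)
      (fun t _ => hderiv t)
  rw [eq_div_iff (by norm_num)] at hξ
  have h0 : h 0 = 0 := by simp [hh]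
  have h1v : h 1 = phi c x + psi c x * d + c ^ 2 / 8 * d ^ 2 - phi c y := by
    simp only [hh, one_mul, one_pow, mul_one]
    rw [show x + d = y by rw [hd]; ring]
  have hnn := hd' ξ hmem
  have : h 1 - h 0 ≥ 0 := by rw [← hξ]; nlinarith
  rw [h0, h1v] at this
  nlinarith


set_option maxHeartbeats 800000

variable {ι κ : Type*} [Fintype ι] [Fintype κ] [DecidableEq ι] [DecidableEq κ]
 [Fintype ι] [Fintype κ] [DecidableEq ι] [DecidableEq κ]

def rloss (X W M : ι → κ → ℝ) : ℝ :=
  ∑ i, ∑ j1, ∑ j2, W i j1 * W i j2 * phi (X i j1 - X i j2) (M i j1 - M i j2)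

def rpair (X W M H : ι → κ → ℝ) : ℝ :=
  ∑ i, ∑ j1, ∑ j2,
    W i j1 * W i j2 * psi (X i j1 - X i j2) (M i j1 - M i j2) * (H i j1 - H i j2)

def rquad (X W H : ι → κ → ℝ) : ℝ :=
  ∑ i, ∑ j1, ∑ j2,
    W i j1 * W i j2 * ((X i j1 - X i j2) ^ 2 / 8) * (H i j1 - H i j2) ^ 2

def rgradE (X W M : ι → κ → ℝ) (a : ι) (b : κ) : ℝ :=
  (∑ j2, W a b * W a j2 * psi (X a b - X a j2) (M a b - M a j2))
  - ∑ j1, W a j1 * W a b * psi (X a j1 - X a b) (M a j1 - M a b)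

def updF (M : ι → κ → ℝ) (a : ι) (b : κ) (t : ℝ) : ι → κ → ℝ :=
  fun i j => if i = a ∧ j = b then t else M i j

lemma delta_collapse (f : ι → κ → κ → ℝ) (a : ι) (b : κ) :
    ∑ i, ∑ j1, ∑ j2, f i j1 j2 *
      ((if i = a ∧ j1 = b then (1:ℝ) else 0) - (if i = a ∧ j2 = b then (1:ℝ) else 0))
    = (∑ j2, f a b j2) - ∑ j1, f a j1 b := by
  have key : ∀ i j1 j2, f i j1 j2 *
      ((if i = a ∧ j1 = b then (1:ℝ) else 0) - (if i = a ∧ j2 = b then (1:ℝ) else 0))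
      = (if i = a ∧ j1 = b then f i j1 j2 else 0) - (if i = a ∧ j2 = b then f i j1 j2 else 0) := by
    intro i j1 j2
    by_cases h1 : i = a ∧ j1 = b <;> by_cases h2 : i = a ∧ j2 = b <;>
      simp [h1, h2] <;> split_ifs <;> ring
  simp only [key, Finset.sum_sub_distrib]
  congr 1
  · rw [Fintype.sum_eq_single a]
    · rw [Fintype.sum_eq_single b]
      · simp
      · intro j1 hj1; rw [Finset.sum_eq_zero]; intro j2 _; simp [hj1]
    · intro i hi
      rw [Finset.sum_eq_zero]; intro j1 _; rw [Finset.sum_eq_zero]; intro j2 _; simp [hi]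
  · rw [Fintype.sum_eq_single a]
    · apply Finset.sum_congr rfl; intro j1 _
      rw [Fintype.sum_eq_single b]
      · simp
      · intro j2 hj2; simp [hj2]
    · intro i hi
      rw [Finset.sum_eq_zero]; intro j1 _; rw [Finset.sum_eq_zero]; intro j2 _; simp [hi]

lemma hasDerivAt_rloss (X W M : ι → κ → ℝ) (a : ι) (b : κ) :
    HasDerivAt (fun t => rloss X W (updF M a b t)) (rgradE X W M a b) (M a b) := by
  have main : HasDerivAt (fun t => rloss X W (updF M a b t))
      (∑ i, ∑ j1, ∑ j2,
        (W i j1 * W i j2 * psi (X i j1 - X i j2) (M i j1 - M i j2)) *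
          ((if i = a ∧ j1 = b then (1:ℝ) else 0) - (if i = a ∧ j2 = b then (1:ℝ) else 0)))
      (M a b) := by
    unfold rloss updF
    apply HasDerivAt.fun_sum; intro i _
    apply HasDerivAt.fun_sum; intro j1 _
    apply HasDerivAt.fun_sum; intro j2 _
    by_cases h1 : i = a ∧ j1 = b <;> by_cases h2 : i = a ∧ j2 = b
    · simp only [h1, h2, if_true, sub_self, mul_zero, and_self]
      exact hasDerivAt_const _ _
    · obtain ⟨h1a, h1b⟩ := h1
      subst h1a; subst h1b
      have hj2 : ¬(j2 = j1) := fun h => h2 ⟨rfl, h⟩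
      simp only [and_self, if_true, hj2, and_false, if_false, eq_self_iff_true, true_and,
        and_true, ite_true, ite_false]
      have hinner : HasDerivAt (fun t : ℝ => t - M i j2) 1 (M i j1) := by
        simpa using (hasDerivAt_id (M i j1)).sub_const (M i j2)
      have := ((hasDerivAt_phi (X i j1 - X i j2) (M i j1 - M i j2)).comp (M i j1) hinner).const_mul
        (W i j1 * W i j2)
      exact this.congr_deriv (by ring)
    · obtain ⟨h2a, h2b⟩ := h2
      subst h2a; subst h2b
      have hj1 : ¬(j1 = j2) := fun h => h1 ⟨rfl, h⟩
      simp only [and_self, if_true, hj1, and_false, if_false, eq_self_iff_true, true_and,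
        and_true, ite_true, ite_false]
      have hinner : HasDerivAt (fun t : ℝ => M i j1 - t) (-1) (M i j2) := by
        simpa using (hasDerivAt_const (M i j2) (M i j1)).fun_sub (hasDerivAt_id (M i j2))
      have := ((hasDerivAt_phi (X i j1 - X i j2) (M i j1 - M i j2)).comp (M i j2) hinner).const_mul
        (W i j1 * W i j2)
      exact this.congr_deriv (by ring)
    · simp only [h1, h2, if_false, sub_self]
      simpa using hasDerivAt_const (M a b)
        (W i j1 * W i j2 * phi (X i j1 - X i j2) (M i j1 - M i j2))
  rwa [delta_collapse (fun i j1 j2 => W i j1 * W i j2 * psi (X i j1 - X i j2) (M i j1 - M i j2))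
    a b] at main

lemma sum_rgradE_mul (X W M H : ι → κ → ℝ) :
    ∑ a, ∑ b, rgradE X W M a b * H a b = rpair X W M H := by
  unfold rgradE rpair
  simp only [sub_mul, Finset.sum_mul, mul_sub, Finset.sum_sub_distrib]
  congr 1
  exact Finset.sum_congr rfl fun a _ => Finset.sum_comm

lemma rloss_convex (X W Y Z : ι → κ → ℝ) (hW : ∀ i j, 0 ≤ W i j) :
    rloss X W Y + rpair X W Y (fun i j => Z i j - Y i j) ≤ rloss X W Z := by
  unfold rloss rpair
  rw [← Finset.sum_add_distrib]
  apply Finset.sum_le_sum; intro i _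
  rw [← Finset.sum_add_distrib]
  apply Finset.sum_le_sum; intro j1 _
  rw [← Finset.sum_add_distrib]
  apply Finset.sum_le_sum; intro j2 _
  have h := phi_taylor_lower (X i j1 - X i j2) (Y i j1 - Y i j2) (Z i j1 - Z i j2)
  have hw : 0 ≤ W i j1 * W i j2 := mul_nonneg (hW _ _) (hW _ _)
  dsimp only
  nlinarith [mul_le_mul_of_nonneg_left h hw]

lemma rloss_descent (X W Y Z : ι → κ → ℝ) (hW : ∀ i j, 0 ≤ W i j) :
    rloss X W Z ≤ rloss X W Y + rpair X W Y (fun i j => Z i j - Y i j)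
      + rquad X W (fun i j => Z i j - Y i j) := by
  unfold rloss rpair rquad
  rw [← Finset.sum_add_distrib, ← Finset.sum_add_distrib]
  apply Finset.sum_le_sum; intro i _
  rw [← Finset.sum_add_distrib, ← Finset.sum_add_distrib]
  apply Finset.sum_le_sum; intro j1 _
  rw [← Finset.sum_add_distrib, ← Finset.sum_add_distrib]
  apply Finset.sum_le_sum; intro j2 _
  have h := phi_taylor_upper (X i j1 - X i j2) (Y i j1 - Y i j2) (Z i j1 - Z i j2)
  have hw : 0 ≤ W i j1 * W i j2 := mul_nonneg (hW _ _) (hW _ _)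
  dsimp only
  nlinarith [mul_le_mul_of_nonneg_left h hw]

lemma rquad_le (X W H : ι → κ → ℝ) (LxB R : ℝ)
    (hW01 : ∀ i j, W i j = 0 ∨ W i j = 1)
    (hX : ∀ i j1 j2, W i j1 = 1 → W i j2 = 1 → (X i j1 - X i j2) ^ 2 ≤ LxB)
    (hLxB : 0 ≤ LxB)
    (hrow : ∀ i, ∑ j, W i j ≤ R) :
    rquad X W H ≤ LxB / 4 * R * ∑ i, ∑ j, H i j ^ 2 := by
  have step1 : rquad X W H ≤ LxB / 8 * ∑ i, ∑ j1, ∑ j2,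
      W i j1 * W i j2 * (H i j1 - H i j2) ^ 2 := by
    unfold rquad
    rw [Finset.mul_sum]
    apply Finset.sum_le_sum; intro i _
    rw [Finset.mul_sum]
    apply Finset.sum_le_sum; intro j1 _
    rw [Finset.mul_sum]
    apply Finset.sum_le_sum; intro j2 _
    rcases hW01 i j1 with h1 | h1
    · simp [h1]
    rcases hW01 i j2 with h2 | h2
    · simp [h2]
    have := hX i j1 j2 h1 h2
    rw [h1, h2]
    nlinarith [sq_nonneg (H i j1 - H i j2)]
  have step2 : ∀ i, ∑ j1, ∑ j2, W i j1 * W i j2 * (H i j1 - H i j2) ^ 2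
      ≤ 2 * R * ∑ j, H i j ^ 2 := by
    intro i
    have expand : ∑ j1, ∑ j2, W i j1 * W i j2 * (H i j1 - H i j2) ^ 2
        = (∑ j, W i j * H i j ^ 2) * (∑ j, W i j)
          - 2 * ((∑ j, W i j * H i j) * (∑ j, W i j * H i j))
          + (∑ j, W i j) * (∑ j, W i j * H i j ^ 2) := by
      rw [Finset.sum_mul_sum, Finset.sum_mul_sum, Finset.sum_mul_sum, Finset.mul_sum]
      rw [show (∑ j1, 2 * ∑ j2, (W i j1 * H i j1) * (W i j2 * H i j2))
          = ∑ j1, ∑ j2, 2 * ((W i j1 * H i j1) * (W i j2 * H i j2)) from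
        Finset.sum_congr rfl fun j1 _ => Finset.mul_sum _ _ _]
      rw [← Finset.sum_sub_distrib, ← Finset.sum_add_distrib]
      refine Finset.sum_congr rfl fun j1 _ => ?_
      rw [← Finset.sum_sub_distrib, ← Finset.sum_add_distrib]
      exact Finset.sum_congr rfl fun j2 _ => by ring
    rw [expand]
    have hW0 : ∀ a b, 0 ≤ W a b := by
      intro a b; rcases hW01 a b with h | h <;> simp [h]
    have hAnn : 0 ≤ ∑ j, W i j * H i j ^ 2 := Finset.sum_nonneg fun j _ => by
      have := hW0 i j; positivity
    have hSnn : 0 ≤ ∑ j, W i j := Finset.sum_nonneg fun j _ => hW0 i j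
    have hSR : (∑ j, W i j) ≤ R := hrow i
    have hAle : (∑ j, W i j * H i j ^ 2) ≤ ∑ j, H i j ^ 2 := by
      apply Finset.sum_le_sum; intro j _
      rcases hW01 i j with h | h <;> simp [h]
      positivity
    have hH2 : 0 ≤ ∑ j, H i j ^ 2 := Finset.sum_nonneg fun j _ => sq_nonneg _
    nlinarith [sq_nonneg (∑ j, W i j * H i j),
      mul_le_mul hAle hSR hSnn hH2]
  calc rquad X W H ≤ LxB / 8 * ∑ i, ∑ j1, ∑ j2, W i j1 * W i j2 * (H i j1 - H i j2) ^ 2 :=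
        step1
    _ ≤ LxB / 8 * ∑ i, 2 * R * ∑ j, H i j ^ 2 := by
        apply mul_le_mul_of_nonneg_left _ (by positivity)
        exact Finset.sum_le_sum fun i _ => step2 i
    _ = LxB / 4 * R * ∑ i, ∑ j, H i j ^ 2 := by
        rw [← Finset.mul_sum]; ring


end NMCAux

namespace NMC

/-- Real `n1 × n2` matrices. -/
abbrev Mat (n1 n2 : ℕ) := Matrix (Fin n1) (Fin n2) ℝ

variable {n1 n2 : ℕ}

/-- The pairwise pseudo-log-likelihood loss
`l_{i1j1,i2j2}(m1,m2) = log(1 + exp(−(x1 − x2)(m1 − m2)))`. -/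
def pl (x1 x2 m1 m2 : ℝ) : ℝ := Real.log (1 + Real.exp (-((x1 - x2) * (m1 - m2))))

/-- The row- and column-wise matrix U-statistic loss `L(M)`. -/
def lossL (X W M : Mat n1 n2) : ℝ :=
  (1 / (n2 : ℝ)) * ∑ i : Fin n1, ∑ j1 : Fin n2, ∑ j2 : Fin n2,
      W i j1 * W i j2 * pl (X i j1) (X i j2) (M i j1) (M i j2) +
  (1 / (n1 : ℝ)) * ∑ j : Fin n2, ∑ i1 : Fin n1, ∑ i2 : Fin n1,
      W i1 j * W i2 j * pl (X i1 j) (X i2 j) (M i1 j) (M i2 j)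

/-- Update a single entry of a matrix. -/
def updEntry (M : Mat n1 n2) (i : Fin n1) (j : Fin n2) (t : ℝ) : Mat n1 n2 :=
  fun i' j' => if i' = i ∧ j' = j then t else M i' j'

/-- The gradient matrix `∇L(M)`, whose `(i,j)` entry is the partial derivative
`∂L(M)/∂m_{ij}`. -/
def gradL (X W M : Mat n1 n2) : Mat n1 n2 :=
  fun i j => deriv (fun t => lossL X W (updEntry M i j t)) (M i j)

/-- Frobenius norm. -/
def frobNorm (A : Mat n1 n2) : ℝ := Real.sqrt (∑ i, ∑ j, A i j ^ 2)

/-- Entrywise sup norm `‖A‖_∞ = max_{i,j} |a_{ij}|`. -/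
def infNorm (A : Mat n1 n2) : ℝ := sSup (Set.range fun p : Fin n1 × Fin n2 => |A p.1 p.2|)

/-- The (unsorted) singular values of `A`: square roots of eigenvalues of `Aᴴ A`. -/
def svalsUnsorted (A : Mat n1 n2) : Fin n2 → ℝ :=
  fun k => Real.sqrt ((Matrix.isHermitian_conjTranspose_mul_self A).eigenvalues k)

/-- Nuclear norm `‖A‖_*`: sum of the singular values. -/
def nuclNorm (A : Mat n1 n2) : ℝ := ∑ k, svalsUnsorted A k

/-- `sval A k` is the `k`-th largest singular value of `A` (1-indexed), `σ_k(A)`. -/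
def sval (A : Mat n1 n2) (k : ℕ) : ℝ :=
  if h : 1 ≤ k ∧ k ≤ n2 then
    svalsUnsorted A (Tuple.sort (svalsUnsorted A) ⟨n2 - k, by omega⟩)
  else 0

/-- Spectral norm `‖A‖ = σ_1(A)`. -/
def specNorm (A : Mat n1 n2) : ℝ := sval A 1

/-- Tail sum of singular values `Σ_{k=r}^{n1 ∧ n2} σ_k(A)`. -/
def tailSum (A : Mat n1 n2) (r : ℕ) : ℝ := ∑ k ∈ Finset.Icc r (min n1 n2), sval A k

/-- Mean of the entries of a matrix, `M_m(A) = 1ᵀ A 1/(n1 n2)`. -/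
def matMean (A : Mat n1 n2) : ℝ := (∑ i, ∑ j, A i j) / ((n1 : ℝ) * (n2 : ℝ))

/-- `M ⊕ c = M + c 1 1ᵀ`. -/
def oplus (M : Mat n1 n2) (c : ℝ) : Mat n1 n2 := fun i j => M i j + c

/-- The weights `𝒲_{i1j1,i2j2}`. -/
def wgt (al : ℝ) (X W : Mat n1 n2) (i1 : Fin n1) (j1 : Fin n2) (i2 : Fin n1) (j2 : Fin n2) : ℝ :=
  W i1 j1 * W i2 j2 * (X i1 j1 - X i2 j2) ^ 2 /
    (4 + 2 * Real.exp (2 * al * (X i1 j1 - X i2 j2)) +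
      2 * Real.exp (2 * al * (X i2 j2 - X i1 j1)))

/-- The sample semi-norm squared `D_s²(M)`. -/
def Ds2 (al : ℝ) (X W M : Mat n1 n2) : ℝ :=
  (1 / (n2 : ℝ)) * ∑ i : Fin n1, ∑ j1 : Fin n2, ∑ j2 : Fin n2,
      (M i j1 - M i j2) ^ 2 * wgt al X W i j1 i j2 +
  (1 / (n1 : ℝ)) * ∑ j : Fin n2, ∑ i1 : Fin n1, ∑ i2 : Fin n1,
      (M i1 j - M i2 j) ^ 2 * wgt al X W i1 j i2 j

/-- The population semi-norm squared `D²(M)` (all weights equal to 1). -/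
def D2 (M : Mat n1 n2) : ℝ :=
  (1 / (n2 : ℝ)) * ∑ i : Fin n1, ∑ j1 : Fin n2, ∑ j2 : Fin n2, (M i j1 - M i j2) ^ 2 +
  (1 / (n1 : ℝ)) * ∑ j : Fin n2, ∑ i1 : Fin n1, ∑ i2 : Fin n1, (M i1 j - M i2 j) ^ 2

/-- `L_x`: squared range of the observed entries of `X`. -/
def Lx (X W : Mat n1 n2) : ℝ :=
  (sSup {x : ℝ | ∃ p : Fin n1 × Fin n2, W p.1 p.2 = 1 ∧ x = X p.1 p.2} -
    sInf {x : ℝ | ∃ p : Fin n1 × Fin n2, W p.1 p.2 = 1 ∧ x = X p.1 p.2}) ^ 2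

/-- `L_w = max_j (Σ_i W_{ij})/n1 + max_i (Σ_j W_{ij})/n2`. -/
def Lw (W : Mat n1 n2) : ℝ :=
  sSup (Set.range fun j : Fin n2 => ∑ i, W i j) / (n1 : ℝ) +
  sSup (Set.range fun i : Fin n1 => ∑ j, W i j) / (n2 : ℝ)

/-- `L_f = L_x L_w / 2`, the Lipschitz constant of `∇L`. -/
def Lf (X W : Mat n1 n2) : ℝ := Lx X W * Lw W / 2

/-- The objective of the proximal problem defining `S_{lam,al}(A)`. -/
def proxObj (lam : ℝ) (A Y : Mat n1 n2) : ℝ := 1 / 2 * frobNorm (Y - A) ^ 2 + lam * nuclNorm Y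

/-- `IsProx lam al A Y` states that `Y = S_{lam,al}(A)`, i.e. `Y` minimizes
`(1/2)‖Y − A‖_F² + lam ‖Y‖_*` over `{Y : ‖Y‖_∞ ≤ al}`. -/
def IsProx (lam al : ℝ) (A Y : Mat n1 n2) : Prop :=
  infNorm Y ≤ al ∧ ∀ Z : Mat n1 n2, infNorm Z ≤ al → proxObj lam A Y ≤ proxObj lam A Z

/-- The penalized objective `F(M) = L(M) + lam ‖M‖_*`. -/
def objF (X W : Mat n1 n2) (lam : ℝ) (M : Mat n1 n2) : ℝ := lossL X W M + lam * nuclNorm M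

/-- `Mh` is a minimizer of `L(M) + lam ‖M‖_*` over `{M : ‖M‖_∞ ≤ al}`. -/
def IsMin (X W : Mat n1 n2) (lam al : ℝ) (Mh : Mat n1 n2) : Prop :=
  infNorm Mh ≤ al ∧ ∀ M : Mat n1 n2, infNorm M ≤ al → objF X W lam Mh ≤ objF X W lam M

/-- `c` minimizes `c' ↦ ‖M ⊕ c'‖_*`; then `T(M) = M ⊕ c`. -/
def IsMinShift (M : Mat n1 n2) (c : ℝ) : Prop :=
  ∀ c' : ℝ, nuclNorm (oplus M c) ≤ nuclNorm (oplus M c')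

/-- `U` and `V` have as columns top-`r` left and right singular vectors of `A`. -/
def IsTopSVD (r : ℕ) (A : Mat n1 n2) (U : Matrix (Fin n1) (Fin r) ℝ)
    (V : Matrix (Fin n2) (Fin r) ℝ) : Prop :=
  Uᵀ * U = 1 ∧ Vᵀ * V = 1 ∧
  A * V = U * Matrix.diagonal (fun k : Fin r => sval A (k.1 + 1)) ∧
  Aᵀ * U = V * Matrix.diagonal (fun k : Fin r => sval A (k.1 + 1))

/-- A choice of top-`r` left and right singular vector matrices of `A`. -/
def UVchoice (r : ℕ) (A : Mat n1 n2) :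
    Matrix (Fin n1) (Fin r) ℝ × Matrix (Fin n2) (Fin r) ℝ :=
  if h : ∃ p : Matrix (Fin n1) (Fin r) ℝ × Matrix (Fin n2) (Fin r) ℝ,
      IsTopSVD r A p.1 p.2 then h.choose else (0, 0)

/-- `Θ2 = (I − UUᵀ)(Θ ⊖ M_m(Θ))(I − VVᵀ)`, with `U,V` top-`r` singular vectors of
`M* ⊕ M_m(Θ)`. -/
def theta2 (Mstar : Mat n1 n2) (r : ℕ) (Θ : Mat n1 n2) : Mat n1 n2 :=
  (1 - (UVchoice r (oplus Mstar (matMean Θ))).1 * (UVchoice r (oplus Mstar (matMean Θ))).1ᵀ) *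
    oplus Θ (-matMean Θ) *
  (1 - (UVchoice r (oplus Mstar (matMean Θ))).2 * (UVchoice r (oplus Mstar (matMean Θ))).2ᵀ)

/-- `Θ1 = Θ ⊖ M_m(Θ) − Θ2`. -/
def theta1 (Mstar : Mat n1 n2) (r : ℕ) (Θ : Mat n1 n2) : Mat n1 n2 :=
  oplus Θ (-matMean Θ) - theta2 Mstar r Θ

/-- The cone `C_r = {Θ : ‖Θ2‖_* ≤ 4 Σ_{k=r}^{n1∧n2} σ_k(M*) + 3‖Θ1‖_*}`. -/
def coneC (Mstar : Mat n1 n2) (r : ℕ) : Set (Mat n1 n2) :=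
  {Θ | nuclNorm (theta2 Mstar r Θ) ≤ 4 * tailSum Mstar r + 3 * nuclNorm (theta1 Mstar r Θ)}

/-- Euclidean norm of a vector. -/
def euclNorm {n : ℕ} (v : Fin n → ℝ) : ℝ := Real.sqrt (∑ i, v i ^ 2)

/-- The quantity `𝔅(M*)` of Theorem 4, computed from `T(M*) = M* ⊕ cstar`. -/
def Bconst (Mstar : Mat n1 n2) (cstar : ℝ) : ℝ :=
  euclNorm ((1 - (UVchoice (oplus Mstar cstar).rank (oplus Mstar cstar)).1 *
        (UVchoice (oplus Mstar cstar).rank (oplus Mstar cstar)).1ᵀ).mulVec fun _ => (1 : ℝ)) *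
    euclNorm ((1 - (UVchoice (oplus Mstar cstar).rank (oplus Mstar cstar)).2 *
        (UVchoice (oplus Mstar cstar).rank (oplus Mstar cstar)).2ᵀ).mulVec fun _ => (1 : ℝ)) /
      Real.sqrt ((n1 : ℝ) * (n2 : ℝ)) -
  Real.sqrt ((n1 : ℝ) * (n2 : ℝ)) *
    |matMean ((UVchoice (oplus Mstar cstar).rank (oplus Mstar cstar)).1 *
      (UVchoice (oplus Mstar cstar).rank (oplus Mstar cstar)).2ᵀ)|

/-- The log-normalization function `b(m) = log ∫ exp(x m + f(x)) dν(x)`. -/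
def bFun (ν : Measure ℝ) (f : ℝ → ℝ) (m : ℝ) : ℝ :=
  Real.log ((∫⁻ x, ENNReal.ofReal (Real.exp (x * m + f x)) ∂ν).toReal)

/-- The random variables `Z̃_{i1j1,i2j2}` of the conditional sub-Gaussian condition. -/
def Ztil {Ω : Type} (Mstar : Mat n1 n2) (X : Ω → Mat n1 n2)
    (i1 : Fin n1) (j1 : Fin n2) (i2 : Fin n1) (j2 : Fin n2) (ω : Ω) : ℝ :=
  (X ω i1 j1 - X ω i2 j2) /
    (2 + Real.exp ((X ω i1 j1 - X ω i2 j2) * (Mstar i1 j1 - Mstar i2 j2)) +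
      Real.exp (-((X ω i1 j1 - X ω i2 j2) * (Mstar i1 j1 - Mstar i2 j2))))

/-- `π_U = max_{i,j} P(W_{ij} = 1)`. -/
def piU {Ω : Type} [MeasurableSpace Ω] (P : Measure Ω) (W : Ω → Mat n1 n2) : ℝ :=
  sSup (Set.range fun p : Fin n1 × Fin n2 => (P {ω | W ω p.1 p.2 = 1}).toReal)

/-- `π_L = min_{i,j} P(W_{ij} = 1)`. -/
def piL {Ω : Type} [MeasurableSpace Ω] (P : Measure Ω) (W : Ω → Mat n1 n2) : ℝ :=
  sInf (Set.range fun p : Fin n1 × Fin n2 => (P {ω | W ω p.1 p.2 = 1}).toReal)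

/-- Rectangular diagonal matrix with diagonal entries `d 0, d 1, …`. -/
def rectDiag (n1 n2 : ℕ) (d : ℕ → ℝ) : Mat n1 n2 :=
  fun i j => if (i : ℕ) = (j : ℕ) then d (i : ℕ) else 0


-- ===================== auxiliary development =====================
section AuxDev
open NMCAux

variable {n1 n2 : ℕ}

lemma pl_eq_phi (x1 x2 m1 m2 : ℝ) : pl x1 x2 m1 m2 = NMCAux.phi (x1 - x2) (m1 - m2) := rfl

def ip (A B : Mat n1 n2) : ℝ := ∑ i, ∑ j, A i j * B i j

def opBall (n1 n2 : ℕ) : Set (Mat n1 n2) :=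
  {B | ∀ v : Fin n2 → ℝ, ∑ i, (B *ᵥ v) i ^ 2 ≤ ∑ j, v j ^ 2}


/-- ⟨Ax, Ay⟩ = ⟨x, (Aᴴ A) y⟩ for real matrices. -/
lemma dot_mulVec_mulVec (A : Mat n1 n2) (x y : Fin n2 → ℝ) :
    (A *ᵥ x) ⬝ᵥ (A *ᵥ y) = x ⬝ᵥ ((Aᴴ * A) *ᵥ y) := by
  rw [← Matrix.mulVec_mulVec, dotProduct_mulVec x,
    Matrix.conjTranspose_eq_transpose_of_trivial, Matrix.vecMul_transpose]

section eig
variable (A : Mat n1 n2)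

/-- row-eigenvector matrix : row k is the k-th eigenvector of AᴴA. -/
def eigV : Matrix (Fin n2) (Fin n2) ℝ :=
  fun k x => (Matrix.isHermitian_conjTranspose_mul_self A).eigenvectorBasis k x

lemma eigV_mul_transpose : eigV A * (eigV A)ᵀ = 1 := by
  ext k l
  have horth := orthonormal_iff_ite.mp
    (Matrix.isHermitian_conjTranspose_mul_self A).eigenvectorBasis.orthonormal (i := k) (j := l)
  simp only [PiLp.inner_apply, RCLike.inner_apply, starRingEnd_apply, star_trivial] at horth
  simp only [Matrix.mul_apply, Matrix.transpose_apply, Matrix.one_apply, eigV]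
  rw [← horth]
  exact Finset.sum_congr rfl fun _ _ => mul_comm _ _

lemma eigV_transpose_mul : (eigV A)ᵀ * eigV A = 1 :=
  mul_eq_one_comm.mp (eigV_mul_transpose A)

lemma mulVec_eigV_row (k : Fin n2) :
    (Aᴴ * A) *ᵥ (fun x => eigV A k x) =
      (Matrix.isHermitian_conjTranspose_mul_self A).eigenvalues k • (fun x => eigV A k x) :=
  (Matrix.isHermitian_conjTranspose_mul_self A).mulVec_eigenvectorBasis k

lemma eval_nonneg (k : Fin n2) :
    0 ≤ (Matrix.isHermitian_conjTranspose_mul_self A).eigenvalues k :=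
  Matrix.eigenvalues_conjTranspose_mul_self_nonneg A k

/-- ⟨A v_k, A v_l⟩ = μ_l δ_{kl} -/
lemma dot_A_eig (k l : Fin n2) :
    (A *ᵥ fun x => eigV A k x) ⬝ᵥ (A *ᵥ fun x => eigV A l x)
      = if k = l then (Matrix.isHermitian_conjTranspose_mul_self A).eigenvalues k else 0 := by
  rw [dot_mulVec_mulVec, mulVec_eigV_row, dotProduct_smul]
  have horth := orthonormal_iff_ite.mp
    (Matrix.isHermitian_conjTranspose_mul_self A).eigenvectorBasis.orthonormal (i := k) (j := l)
  simp only [PiLp.inner_apply, RCLike.inner_apply, starRingEnd_apply, star_trivial] at horth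
  have : (fun x => eigV A k x) ⬝ᵥ (fun x => eigV A l x) = if k = l then 1 else 0 := by
    simp only [dotProduct, eigV]; rw [← horth]; exact Finset.sum_congr rfl fun _ _ => mul_comm _ _
  rw [this]
  by_cases h : k = l <;> simp [h]

lemma sq_svals (k : Fin n2) :
    svalsUnsorted A k ^ 2 = (Matrix.isHermitian_conjTranspose_mul_self A).eigenvalues k :=
  Real.sq_sqrt (eval_nonneg A k)

lemma svals_nonneg (k : Fin n2) : 0 ≤ svalsUnsorted A k := Real.sqrt_nonneg _

/-- A = (A Vᵀ) V -/
lemma A_eq_AVt_V : A = (A * (eigV A)ᵀ) * eigV A := by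
  rw [Matrix.mul_assoc, eigV_transpose_mul, Matrix.mul_one]

end eig

lemma ip_le_nucl (A B : Mat n1 n2) (hB : B ∈ opBall n1 n2) : ip A B ≤ nuclNorm A := by
  classical
  -- ip A B = ∑ k, (A v_k) ⬝ᵥ (B v_k)
  have expand : ip A B = ∑ k, (A *ᵥ fun x => eigV A k x) ⬝ᵥ (B *ᵥ fun x => eigV A k x) := by
    conv_lhs => rw [ip]
    have hA : ∀ i j, A i j = ∑ k, (A * (eigV A)ᵀ) i k * eigV A k j := by
      intro i j
      conv_lhs => rw [A_eq_AVt_V A]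
      rw [Matrix.mul_apply]
    calc (∑ i, ∑ j, A i j * B i j)
        = ∑ i, ∑ j, ∑ k, ((A * (eigV A)ᵀ) i k * eigV A k j) * B i j := by
          refine Finset.sum_congr rfl fun i _ => Finset.sum_congr rfl fun j _ => ?_
          rw [← Finset.sum_mul, ← hA]
      _ = ∑ k, ∑ i, ∑ j, ((A * (eigV A)ᵀ) i k * eigV A k j) * B i j := by
          rw [show (∑ i, ∑ j, ∑ k, ((A * (eigV A)ᵀ) i k * eigV A k j) * B i j)
              = ∑ i, ∑ k, ∑ j, ((A * (eigV A)ᵀ) i k * eigV A k j) * B i j from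
            Finset.sum_congr rfl fun i _ => Finset.sum_comm]
          exact Finset.sum_comm
      _ = ∑ k, (A *ᵥ fun x => eigV A k x) ⬝ᵥ (B *ᵥ fun x => eigV A k x) := by
          refine Finset.sum_congr rfl fun k _ => ?_
          rw [dotProduct]
          refine Finset.sum_congr rfl fun i _ => ?_
          have h1 : (A * (eigV A)ᵀ) i k = (A *ᵥ fun x => eigV A k x) i := by
            simp [Matrix.mul_apply, Matrix.mulVec, dotProduct, Matrix.transpose_apply]
          have h2 : (B *ᵥ fun x => eigV A k x) i = ∑ j, B i j * eigV A k j := by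
            simp [Matrix.mulVec, dotProduct]
          rw [h2, ← h1, Finset.mul_sum]
          exact Finset.sum_congr rfl fun j _ => by ring
  rw [expand]
  unfold nuclNorm
  apply Finset.sum_le_sum
  intro k _
  set f := A *ᵥ fun x => eigV A k x
  set g := B *ᵥ fun x => eigV A k x with hg
  have hf2 : ∑ i, f i ^ 2 = (Matrix.isHermitian_conjTranspose_mul_self A).eigenvalues k := by
    have := dot_A_eig A k k
    simp only [eq_self_iff_true, if_true] at this
    rw [← this]
    simp [dotProduct, f, sq]
  have hg2 : ∑ i, g i ^ 2 ≤ 1 := by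
    have := hB (fun x => eigV A k x)
    refine le_trans this ?_
    have horth := orthonormal_iff_ite.mp
      (Matrix.isHermitian_conjTranspose_mul_self A).eigenvectorBasis.orthonormal (i := k) (j := k)
    simp only [PiLp.inner_apply, RCLike.inner_apply, starRingEnd_apply, star_trivial,
      eq_self_iff_true, if_true] at horth
    have : ∑ j, eigV A k j ^ 2 = 1 := by
      rw [← horth]; exact Finset.sum_congr rfl fun j _ => by unfold eigV; ring
    rw [this]
  have cs := Finset.sum_mul_sq_le_sq_mul_sq Finset.univ f g
  have habs : f ⬝ᵥ g ≤ Real.sqrt ((∑ i, f i ^ 2) * (∑ i, g i ^ 2)) := by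
    have h1 : f ⬝ᵥ g ≤ |∑ i, f i * g i| := le_abs_self _
    have h2 : |∑ i, f i * g i| = Real.sqrt ((∑ i, f i * g i) ^ 2) := (Real.sqrt_sq_eq_abs _).symm
    rw [h2] at h1
    exact le_trans h1 (Real.sqrt_le_sqrt cs)
  refine le_trans habs ?_
  rw [Real.sqrt_mul (by rw [hf2]; exact eval_nonneg A k)]
  unfold svalsUnsorted
  rw [hf2]
  nlinarith [Real.sqrt_nonneg ((Matrix.isHermitian_conjTranspose_mul_self A).eigenvalues k),
    Real.sqrt_le_sqrt hg2, Real.sqrt_one, Real.sqrt_nonneg (∑ i, g i ^ 2)]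


section witness
variable (A : Mat n1 n2)

/-- scaled left singular vectors as rows -/
def eigU : Matrix (Fin n2) (Fin n1) ℝ :=
  fun k i => if (Matrix.isHermitian_conjTranspose_mul_self A).eigenvalues k = 0 then 0
    else (svalsUnsorted A k)⁻¹ * (A *ᵥ fun x => eigV A k x) i

lemma svals_ne_zero {k : Fin n2}
    (h : (Matrix.isHermitian_conjTranspose_mul_self A).eigenvalues k ≠ 0) :
    svalsUnsorted A k ≠ 0 := by
  unfold svalsUnsorted
  intro hc
  exact h (le_antisymm (by nlinarith [Real.sq_sqrt (eval_nonneg A k), hc]) (eval_nonneg A k))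

lemma eigU_mul_transpose : eigU A * (eigU A)ᵀ
    = Matrix.diagonal (fun k => if (Matrix.isHermitian_conjTranspose_mul_self A).eigenvalues k = 0
        then 0 else 1) := by
  ext k l
  rw [Matrix.mul_apply, Matrix.diagonal_apply]
  by_cases hk : (Matrix.isHermitian_conjTranspose_mul_self A).eigenvalues k = 0
  · simp [eigU, hk, Matrix.transpose_apply, -Matrix.conjTranspose_eq_transpose_of_trivial]
  by_cases hl : (Matrix.isHermitian_conjTranspose_mul_self A).eigenvalues l = 0
  · have hkl : k ≠ l := fun h => hk (h ▸ hl)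
    simp [eigU, hl, Matrix.transpose_apply, hkl, -Matrix.conjTranspose_eq_transpose_of_trivial]
  · have : ∀ i, eigU A k i * (eigU A)ᵀ i l
        = (svalsUnsorted A k)⁻¹ * (svalsUnsorted A l)⁻¹ *
          ((A *ᵥ fun x => eigV A k x) i * (A *ᵥ fun x => eigV A l x) i) := by
      intro i; simp [eigU, hk, hl, Matrix.transpose_apply, -Matrix.conjTranspose_eq_transpose_of_trivial]; ring
    rw [Finset.sum_congr rfl fun i _ => this i, ← Finset.mul_sum]
    have hd := dot_A_eig A k l
    rw [dotProduct] at hd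
    rw [hd]
    by_cases hkl : k = l
    · subst hkl
      simp only [if_pos rfl, hk, if_false, if_true, eq_self_iff_true]
      have h1 : svalsUnsorted A k ≠ 0 := svals_ne_zero A hk
      have h2 := sq_svals A k
      field_simp
      nlinarith [h2]
    · simp [hkl]

lemma ip_eigB0 : ip A ((eigU A)ᵀ * eigV A) = nuclNorm A := by
  unfold ip nuclNorm
  have hB0 : ∀ i j, ((eigU A)ᵀ * eigV A) i j = ∑ k, eigU A k i * eigV A k j := by
    intro i j; rw [Matrix.mul_apply]; exact Finset.sum_congr rfl fun k _ => rfl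
  calc (∑ i, ∑ j, A i j * ((eigU A)ᵀ * eigV A) i j)
      = ∑ i, ∑ j, ∑ k, A i j * (eigU A k i * eigV A k j) := by
        refine Finset.sum_congr rfl fun i _ => Finset.sum_congr rfl fun j _ => ?_
        rw [hB0, Finset.mul_sum]
    _ = ∑ k, ∑ i, ∑ j, A i j * (eigU A k i * eigV A k j) := by
        rw [show (∑ i, ∑ j, ∑ k, A i j * (eigU A k i * eigV A k j))
            = ∑ i, ∑ k, ∑ j, A i j * (eigU A k i * eigV A k j) from
          Finset.sum_congr rfl fun i _ => Finset.sum_comm]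
        exact Finset.sum_comm
    _ = ∑ k, ∑ i, eigU A k i * (A *ᵥ fun x => eigV A k x) i := by
        refine Finset.sum_congr rfl fun k _ => Finset.sum_congr rfl fun i _ => ?_
        rw [show (A *ᵥ fun x => eigV A k x) i = ∑ j, A i j * eigV A k j from rfl,
          Finset.mul_sum]
        exact Finset.sum_congr rfl fun j _ => by ring
    _ = ∑ k, svalsUnsorted A k := by
        refine Finset.sum_congr rfl fun k _ => ?_
        by_cases hk : (Matrix.isHermitian_conjTranspose_mul_self A).eigenvalues k = 0
        · simp only [eigU, hk, if_true, zero_mul, Finset.sum_const_zero]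
          unfold svalsUnsorted
          rw [hk, Real.sqrt_zero]
        · have h1 : ∀ i, eigU A k i * (A *ᵥ fun x => eigV A k x) i
              = (svalsUnsorted A k)⁻¹ *
                ((A *ᵥ fun x => eigV A k x) i * (A *ᵥ fun x => eigV A k x) i) := by
            intro i; simp [eigU, hk, -Matrix.conjTranspose_eq_transpose_of_trivial]; ring
          rw [Finset.sum_congr rfl fun i _ => h1 i, ← Finset.mul_sum]
          have hd := dot_A_eig A k k
          rw [dotProduct] at hd
          simp only [eq_self_iff_true, if_true] at hd
          rw [hd]
          have h2 := sq_svals A k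
          have h3 : svalsUnsorted A k ≠ 0 := svals_ne_zero A hk
          field_simp
          nlinarith [h2]

lemma eigB0_mem : ((eigU A)ᵀ * eigV A) ∈ opBall n1 n2 := by
  intro x
  have hs : ∀ (m : ℕ) (v : Fin m → ℝ), ∑ i, v i ^ 2 = v ⬝ᵥ v := by
    intro m v; rw [dotProduct]; exact Finset.sum_congr rfl fun i _ => sq (v i)
  rw [hs, hs]
  have hmv : ((eigU A)ᵀ * eigV A) *ᵥ x = (eigU A)ᵀ *ᵥ (eigV A *ᵥ x) := by
    rw [Matrix.mulVec_mulVec]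
  rw [hmv]
  set c := eigV A *ᵥ x with hc
  have h1 : ((eigU A)ᵀ *ᵥ c) ⬝ᵥ ((eigU A)ᵀ *ᵥ c) = c ⬝ᵥ ((eigU A * (eigU A)ᵀ) *ᵥ c) := by
    have := dot_mulVec_mulVec ((eigU A)ᵀ) c c
    rwa [Matrix.conjTranspose_eq_transpose_of_trivial, Matrix.transpose_transpose] at this
  have h2 : c ⬝ᵥ c = x ⬝ᵥ x := by
    have := dot_mulVec_mulVec (eigV A) x x
    rwa [Matrix.conjTranspose_eq_transpose_of_trivial, eigV_transpose_mul, Matrix.one_mulVec]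
      at this
  rw [h1, eigU_mul_transpose, ← h2]
  rw [dotProduct, dotProduct]
  apply Finset.sum_le_sum
  intro k _
  rw [Matrix.mulVec_diagonal]
  by_cases hk : (Matrix.isHermitian_conjTranspose_mul_self A).eigenvalues k = 0 <;>
    simp [hk, -Matrix.conjTranspose_eq_transpose_of_trivial] <;> nlinarith [sq_nonneg (c k)]

end witness

lemma nucl_witness (A : Mat n1 n2) : ∃ B ∈ opBall n1 n2, ip A B = nuclNorm A :=
  ⟨(eigU A)ᵀ * eigV A, eigB0_mem A, ip_eigB0 A⟩



-- ip algebra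
lemma ip_comm (A B : Mat n1 n2) : ip A B = ip B A := by
  unfold ip
  exact Finset.sum_congr rfl fun i _ => Finset.sum_congr rfl fun j _ => mul_comm _ _

lemma ip_nonneg_self (A : Mat n1 n2) : 0 ≤ ip A A :=
  Finset.sum_nonneg fun i _ => Finset.sum_nonneg fun j _ => mul_self_nonneg _

lemma ip_self_zero (A : Mat n1 n2) : ip (A - A) (A - A) = 0 := by
  unfold ip
  simp [Matrix.sub_apply]

lemma frob_sq (A : Mat n1 n2) : frobNorm A ^ 2 = ip A A := by
  unfold frobNorm ip
  rw [Real.sq_sqrt (by positivity)]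
  exact Finset.sum_congr rfl fun i _ => Finset.sum_congr rfl fun j _ => pow_two _

lemma ip_sq_identity (P Y Z : Mat n1 n2) :
    ip (Y - Z) (Y - Z)
      = ip (P - Z) (P - Z) + ip (P - Y) (P - Y) + 2 * ip (P - Y) (Z - P) := by
  have key : ∀ i j, (Y - Z) i j * (Y - Z) i j
      = (P - Z) i j * (P - Z) i j + (P - Y) i j * (P - Y) i j
        + 2 * ((P - Y) i j * (Z - P) i j) := by
    intro i j; simp only [Matrix.sub_apply]; ring
  unfold ip
  rw [Finset.sum_congr rfl fun i _ => Finset.sum_congr rfl fun j _ => key i j]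
  simp [Finset.sum_add_distrib, Finset.mul_sum]

lemma ip_prox_expand (P A Z : Mat n1 n2) (t : ℝ) :
    ip (P + t • (Z - P) - A) (P + t • (Z - P) - A)
      = ip (P - A) (P - A) + 2 * t * ip (P - A) (Z - P) + t ^ 2 * ip (Z - P) (Z - P) := by
  have key : ∀ i j, (P + t • (Z - P) - A) i j * (P + t • (Z - P) - A) i j
      = (P - A) i j * (P - A) i j + 2 * t * ((P - A) i j * (Z - P) i j)
        + t ^ 2 * ((Z - P) i j * (Z - P) i j) := by
    intro i j
    simp only [Matrix.sub_apply, Matrix.add_apply, Matrix.smul_apply, smul_eq_mul]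
    ring
  unfold ip
  rw [Finset.sum_congr rfl fun i _ => Finset.sum_congr rfl fun j _ => key i j]
  simp [Finset.sum_add_distrib, Finset.mul_sum]

lemma ip_comb (B P Z : Mat n1 n2) (t : ℝ) :
    ip ((1 - t) • P + t • Z) B = (1 - t) * ip P B + t * ip Z B := by
  have key : ∀ i j, ((1 - t) • P + t • Z) i j * B i j
      = (1 - t) * (P i j * B i j) + t * (Z i j * B i j) := by
    intro i j
    simp only [Matrix.add_apply, Matrix.smul_apply, smul_eq_mul]
    ring
  unfold ip
  rw [Finset.sum_congr rfl fun i _ => Finset.sum_congr rfl fun j _ => key i j]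
  simp [Finset.sum_add_distrib, Finset.mul_sum]

lemma ip_sub_expand (G Z Y P : Mat n1 n2) :
    ip G (Z - Y) = ip G (Z - P) + ip G (P - Y) := by
  have key : ∀ i j, G i j * (Z - Y) i j
      = G i j * (Z - P) i j + G i j * (P - Y) i j := by
    intro i j; simp only [Matrix.sub_apply]; ring
  unfold ip
  rw [Finset.sum_congr rfl fun i _ => Finset.sum_congr rfl fun j _ => key i j]
  simp [Finset.sum_add_distrib]

lemma ip_grad_split (P Y G : Mat n1 n2) (c : ℝ) (Q : Mat n1 n2) :
    ip (P - (Y - c • G)) Q = ip (P - Y) Q + c * ip G Q := by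
  have key : ∀ i j, (P - (Y - c • G)) i j * Q i j
      = (P - Y) i j * Q i j + c * (G i j * Q i j) := by
    intro i j
    simp only [Matrix.sub_apply, Matrix.smul_apply, smul_eq_mul]
    ring
  unfold ip
  rw [Finset.sum_congr rfl fun i _ => Finset.sum_congr rfl fun j _ => key i j]
  simp [Finset.sum_add_distrib, Finset.mul_sum]

-- nuclear norm facts
lemma nucl_combo (P Z : Mat n1 n2) {t : ℝ} (h0 : 0 ≤ t) (h1 : t ≤ 1) :
    nuclNorm (P + t • (Z - P)) ≤ (1 - t) * nuclNorm P + t * nuclNorm Z := by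
  have hrw : P + t • (Z - P) = (1 - t) • P + t • Z := by
    ext i j
    simp only [Matrix.add_apply, Matrix.smul_apply, Matrix.sub_apply, smul_eq_mul]
    ring
  obtain ⟨B, hB, hip⟩ := nucl_witness (P + t • (Z - P))
  rw [← hip, hrw, ip_comb]
  have h2 := ip_le_nucl P B hB
  have h3 := ip_le_nucl Z B hB
  have h4 : (0:ℝ) ≤ 1 - t := by linarith
  nlinarith

lemma opBall_entry_le {B : Mat n1 n2} (hB : B ∈ opBall n1 n2) (i : Fin n1) (j : Fin n2) :
    |B i j| ≤ 1 := by
  classical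
  have h := hB (Pi.single j 1)
  have hBv : ∀ i', (B *ᵥ Pi.single j 1) i' = B i' j := by
    intro i'
    simp [Matrix.mulVec, dotProduct, Pi.single_apply]
  have hv : ∑ j', (Pi.single j 1 : Fin n2 → ℝ) j' ^ 2 = 1 := by
    simp [Pi.single_apply]
  rw [hv] at h
  have h2 : B i j ^ 2 ≤ 1 := by
    calc B i j ^ 2 = (B *ᵥ Pi.single j 1) i ^ 2 := by rw [hBv]
      _ ≤ ∑ i', (B *ᵥ Pi.single j 1) i' ^ 2 :=
          Finset.single_le_sum (f := fun i' => (B *ᵥ Pi.single j 1) i' ^ 2)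
            (fun i' _ => sq_nonneg _) (Finset.mem_univ i)
      _ ≤ 1 := h
  nlinarith [abs_nonneg (B i j), sq_abs (B i j)]

lemma nucl_lip (P Q : Mat n1 n2) :
    nuclNorm P - nuclNorm Q ≤ ∑ i, ∑ j, |P i j - Q i j| := by
  obtain ⟨B, hB, hip⟩ := nucl_witness P
  have h1 : ip P B = ip Q B + ∑ i, ∑ j, (P i j - Q i j) * B i j := by
    unfold ip
    rw [← Finset.sum_add_distrib]
    refine Finset.sum_congr rfl fun i _ => ?_
    rw [← Finset.sum_add_distrib]
    exact Finset.sum_congr rfl fun j _ => by ring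
  have h2 : (∑ i, ∑ j, (P i j - Q i j) * B i j) ≤ ∑ i, ∑ j, |P i j - Q i j| := by
    refine Finset.sum_le_sum fun i _ => Finset.sum_le_sum fun j _ => ?_
    calc (P i j - Q i j) * B i j ≤ |(P i j - Q i j) * B i j| := le_abs_self _
      _ = |P i j - Q i j| * |B i j| := abs_mul _ _
      _ ≤ |P i j - Q i j| * 1 :=
          mul_le_mul_of_nonneg_left (opBall_entry_le hB i j) (abs_nonneg _)
      _ = |P i j - Q i j| := mul_one _
  have h3 := ip_le_nucl Q B hB
  rw [← hip]
  linarith [h1, h2, h3]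

lemma nucl_cont : Continuous (nuclNorm : Mat n1 n2 → ℝ) := by
  rw [continuous_iff_continuousAt]
  intro Y
  have hg : Continuous fun X : Mat n1 n2 => ∑ i, ∑ j, |X i j - Y i j| := by
    apply continuous_finset_sum; intro i _
    apply continuous_finset_sum; intro j _
    exact ((continuous_id.matrix_elem i j).sub continuous_const).abs
  have hg0 : Filter.Tendsto (fun X : Mat n1 n2 => ∑ i, ∑ j, |X i j - Y i j|) (nhds Y)
      (nhds 0) := by
    have := hg.continuousAt (x := Y)
    simpa using this.tendsto
  have hsq : Filter.Tendsto (fun X : Mat n1 n2 => nuclNorm X - nuclNorm Y) (nhds Y)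
      (nhds 0) := by
    apply squeeze_zero_norm _ hg0
    intro X
    rw [Real.norm_eq_abs, abs_le]
    constructor
    · have := nucl_lip Y X
      have habs : (∑ i, ∑ j, |Y i j - X i j|) = ∑ i, ∑ j, |X i j - Y i j| := by
        refine Finset.sum_congr rfl fun i _ => Finset.sum_congr rfl fun j _ => abs_sub_comm _ _
      linarith [habs ▸ this]
    · exact nucl_lip X Y
  have := hsq.add_const (nuclNorm Y)
  simpa [ContinuousAt] using this

lemma lossL_cont (X W : Mat n1 n2) : Continuous fun M : Mat n1 n2 => lossL X W M := by
  have hterm : ∀ (x1 x2 : ℝ) (i1 : Fin n1) (j1 : Fin n2) (i2 : Fin n1) (j2 : Fin n2),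
      Continuous (fun M : Mat n1 n2 => pl x1 x2 (M i1 j1) (M i2 j2)) := by
    intro x1 x2 i1 j1 i2 j2
    unfold pl
    have hm : Continuous fun M : Mat n1 n2 => M i1 j1 - M i2 j2 :=
      (continuous_id.matrix_elem i1 j1).sub
        (continuous_id.matrix_elem i2 j2)
    have hin : Continuous fun M : Mat n1 n2 =>
        1 + Real.exp (-((x1 - x2) * (M i1 j1 - M i2 j2))) :=
      continuous_const.add (Real.continuous_exp.comp (continuous_const.mul hm).neg)
    exact hin.log fun M => ne_of_gt (by positivity)
  unfold lossL
  apply Continuous.add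
  · apply Continuous.mul continuous_const
    apply continuous_finset_sum; intro i _
    apply continuous_finset_sum; intro j1 _
    apply continuous_finset_sum; intro j2 _
    exact Continuous.mul continuous_const (hterm _ _ _ _ _ _)
  · apply Continuous.mul continuous_const
    apply continuous_finset_sum; intro j _
    apply continuous_finset_sum; intro i1 _
    apply continuous_finset_sum; intro i2 _
    exact Continuous.mul continuous_const (hterm _ _ _ _ _ _)

-- lossL interface to NMCAux
lemma lossL_eq (X W M : Mat n1 n2) :
    lossL X W M = (1 / (n2 : ℝ)) * NMCAux.rloss (fun i j => X i j) (fun i j => W i j)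
        (fun i j => M i j)
      + (1 / (n1 : ℝ)) * NMCAux.rloss (fun j i => X i j) (fun j i => W i j)
        (fun j i => M i j) := rfl

lemma gradL_eq (X W M : Mat n1 n2) (a : Fin n1) (b : Fin n2) :
    gradL X W M a b
      = (1 / (n2 : ℝ)) * NMCAux.rgradE (fun i j => X i j) (fun i j => W i j)
          (fun i j => M i j) a b
        + (1 / (n1 : ℝ)) * NMCAux.rgradE (fun j i => X i j) (fun j i => W i j)
          (fun j i => M i j) b a := by
  unfold gradL
  have h1 : (fun t => lossL X W (updEntry M a b t))
      = fun t => (1 / (n2 : ℝ)) * NMCAux.rloss (fun i j => X i j) (fun i j => W i j)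
          (NMCAux.updF (fun i j => M i j) a b t)
        + (1 / (n1 : ℝ)) * NMCAux.rloss (fun j i => X i j) (fun j i => W i j)
          (NMCAux.updF (fun j i => M i j) b a t) := by
    funext t
    have h2 : (fun j i => updEntry M a b t i j)
        = NMCAux.updF (fun j i => M i j) b a t := by
      funext j i
      simp only [NMCAux.updF, updEntry]
      by_cases h : i = a ∧ j = b
      · rw [if_pos h, if_pos ⟨h.2, h.1⟩]
      · rw [if_neg h, if_neg (fun hc => h ⟨hc.2, hc.1⟩)]
    have h3 := congrArg (NMCAux.rloss (fun j i => X i j) (fun j i => W i j)) h2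
    rw [lossL_eq, h3]
    rfl
  rw [h1]
  exact (((NMCAux.hasDerivAt_rloss _ _ _ a b).const_mul _).add
    ((NMCAux.hasDerivAt_rloss _ _ _ b a).const_mul _)).deriv

lemma ip_gradL (X W M H : Mat n1 n2) :
    ip (gradL X W M) H
      = (1 / (n2 : ℝ)) * NMCAux.rpair (fun i j => X i j) (fun i j => W i j)
          (fun i j => M i j) (fun i j => H i j)
        + (1 / (n1 : ℝ)) * NMCAux.rpair (fun j i => X i j) (fun j i => W i j)
          (fun j i => M i j) (fun j i => H i j) := by
  unfold ip
  have key : ∀ (i : Fin n1) (j : Fin n2), gradL X W M i j * H i j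
      = (1 / (n2 : ℝ)) * (NMCAux.rgradE (fun i j => X i j) (fun i j => W i j)
          (fun i j => M i j) i j * H i j)
        + (1 / (n1 : ℝ)) * (NMCAux.rgradE (fun j i => X i j) (fun j i => W i j)
          (fun j i => M i j) j i * H i j) := by
    intro i j; rw [gradL_eq]; ring
  rw [Finset.sum_congr rfl fun i _ => Finset.sum_congr rfl fun j _ => key i j]
  simp only [Finset.sum_add_distrib, ← Finset.mul_sum]
  congr 1
  · exact congrArg _ (NMCAux.sum_rgradE_mul _ _ _ _)
  · congr 1
    rw [← NMCAux.sum_rgradE_mul (fun j i => X i j) (fun j i => W i j)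
      (fun j i => M i j) (fun j i => H i j)]
    exact Finset.sum_comm

lemma lossL_lower (X W : Mat n1 n2) (hW01 : ∀ i j, W i j = 0 ∨ W i j = 1)
    (Y Z : Mat n1 n2) :
    lossL X W Y + ip (gradL X W Y) (Z - Y) ≤ lossL X W Z := by
  have hW0 : ∀ i j, (0:ℝ) ≤ W i j := by
    intro i j; rcases hW01 i j with h | h <;> simp [h]
  have hsub : ∀ (i : Fin n1) (j : Fin n2), (Z - Y) i j = Z i j - Y i j := by
    intro i j; simp [Matrix.sub_apply]
  rw [lossL_eq X W Y, lossL_eq X W Z, ip_gradL]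
  have hr := NMCAux.rloss_convex (fun i j => X i j) (fun i j => W i j)
    (fun i j => Y i j) (fun i j => Z i j) (fun i j => hW0 i j)
  have hc := NMCAux.rloss_convex (fun j i => X i j) (fun j i => W i j)
    (fun j i => Y i j) (fun j i => Z i j) (fun j i => hW0 i j)
  have e1 : NMCAux.rpair (fun i j => X i j) (fun i j => W i j) (fun i j => Y i j)
      (fun i j => (Z - Y) i j)
      = NMCAux.rpair (fun i j => X i j) (fun i j => W i j) (fun i j => Y i j)
        (fun i j => Z i j - Y i j) := rfl
  have e2 : NMCAux.rpair (fun j i => X i j) (fun j i => W i j) (fun j i => Y i j)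
      (fun j i => (Z - Y) i j)
      = NMCAux.rpair (fun j i => X i j) (fun j i => W i j) (fun j i => Y i j)
        (fun j i => Z i j - Y i j) := rfl
  rw [e1, e2]
  have c1 : (0:ℝ) ≤ 1 / (n2 : ℝ) := by positivity
  have c2 : (0:ℝ) ≤ 1 / (n1 : ℝ) := by positivity
  nlinarith [mul_le_mul_of_nonneg_left hr c1, mul_le_mul_of_nonneg_left hc c2]

-- the observed-range bound
lemma obs_sq_le (X W : Mat n1 n2) (hWnz : ∃ i j, W i j = 1)
    (i1 : Fin n1) (j1 : Fin n2) (i2 : Fin n1) (j2 : Fin n2)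
    (h1 : W i1 j1 = 1) (h2 : W i2 j2 = 1) :
    (X i1 j1 - X i2 j2) ^ 2 ≤ Lx X W := by
  set S : Set ℝ := {x : ℝ | ∃ p : Fin n1 × Fin n2, W p.1 p.2 = 1 ∧ x = X p.1 p.2} with hS
  have hfin : S.Finite := by
    apply Set.Finite.subset (Set.finite_range fun p : Fin n1 × Fin n2 => X p.1 p.2)
    rintro x ⟨p, _, rfl⟩
    exact ⟨p, rfl⟩
  have hmem1 : X i1 j1 ∈ S := ⟨(i1, j1), h1, rfl⟩
  have hmem2 : X i2 j2 ∈ S := ⟨(i2, j2), h2, rfl⟩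
  have hub1 : X i1 j1 ≤ sSup S := le_csSup hfin.bddAbove hmem1
  have hub2 : X i2 j2 ≤ sSup S := le_csSup hfin.bddAbove hmem2
  have hlb1 : sInf S ≤ X i1 j1 := csInf_le hfin.bddBelow hmem1
  have hlb2 : sInf S ≤ X i2 j2 := csInf_le hfin.bddBelow hmem2
  unfold Lx
  rw [← hS]
  apply sq_le_sq' <;> linarith

lemma rowsum_le (W : Mat n1 n2) (i : Fin n1) :
    (∑ j, W i j) ≤ sSup (Set.range fun i : Fin n1 => ∑ j, W i j) :=
  le_csSup (Set.Finite.bddAbove (Set.finite_range _)) ⟨i, rfl⟩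

lemma colsum_le (W : Mat n1 n2) (j : Fin n2) :
    (∑ i, W i j) ≤ sSup (Set.range fun j : Fin n2 => ∑ i, W i j) :=
  le_csSup (Set.Finite.bddAbove (Set.finite_range _)) ⟨j, rfl⟩

lemma Lf_nonneg (X W : Mat n1 n2) (hn1 : 0 < n1) (hn2 : 0 < n2)
    (hW01 : ∀ i j, W i j = 0 ∨ W i j = 1) : 0 ≤ Lf X W := by
  have hW0 : ∀ i j, (0:ℝ) ≤ W i j := by
    intro i j; rcases hW01 i j with h | h <;> simp [h]
  have hLx : 0 ≤ Lx X W := sq_nonneg _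
  have hR : 0 ≤ sSup (Set.range fun i : Fin n1 => ∑ j, W i j) :=
    le_trans (Finset.sum_nonneg fun j _ => hW0 ⟨0, hn1⟩ j) (rowsum_le W ⟨0, hn1⟩)
  have hC : 0 ≤ sSup (Set.range fun j : Fin n2 => ∑ i, W i j) :=
    le_trans (Finset.sum_nonneg fun i _ => hW0 i ⟨0, hn2⟩) (colsum_le W ⟨0, hn2⟩)
  have hLw : 0 ≤ Lw W := by
    unfold Lw
    have h1 : (0:ℝ) ≤ (n1:ℝ) := Nat.cast_nonneg n1
    have h2 : (0:ℝ) ≤ (n2:ℝ) := Nat.cast_nonneg n2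
    exact add_nonneg (div_nonneg hC h1) (div_nonneg hR h2)
  unfold Lf
  exact div_nonneg (mul_nonneg hLx hLw) (by norm_num)

lemma lossL_upper (X W : Mat n1 n2) (hn1 : 0 < n1) (hn2 : 0 < n2)
    (hW01 : ∀ i j, W i j = 0 ∨ W i j = 1) (hWnz : ∃ i j, W i j = 1)
    (Y Z : Mat n1 n2) :
    lossL X W Z ≤ lossL X W Y + ip (gradL X W Y) (Z - Y)
      + Lf X W / 2 * ip (Z - Y) (Z - Y) := by
  have hW0 : ∀ i j, (0:ℝ) ≤ W i j := by
    intro i j; rcases hW01 i j with h | h <;> simp [h]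
  set R := sSup (Set.range fun i : Fin n1 => ∑ j, W i j) with hRdef
  set C := sSup (Set.range fun j : Fin n2 => ∑ i, W i j) with hCdef
  have hLx : 0 ≤ Lx X W := sq_nonneg _
  -- row part
  have hdr := NMCAux.rloss_descent (fun i j => X i j) (fun i j => W i j)
    (fun i j => Y i j) (fun i j => Z i j) (fun i j => hW0 i j)
  have hdc := NMCAux.rloss_descent (fun j i => X i j) (fun j i => W i j)
    (fun j i => Y i j) (fun j i => Z i j) (fun j i => hW0 i j)
  have hqr := NMCAux.rquad_le (fun i j => X i j) (fun i j => W i j)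
    (fun i j => Z i j - Y i j) (Lx X W) R (fun i j => hW01 i j)
    (fun i j1 j2 ha hb => obs_sq_le X W hWnz i j1 i j2 ha hb) hLx
    (fun i => rowsum_le W i)
  have hqc := NMCAux.rquad_le (fun j i => X i j) (fun j i => W i j)
    (fun j i => Z i j - Y i j) (Lx X W) C (fun j i => hW01 i j)
    (fun j i1 i2 ha hb => obs_sq_le X W hWnz i1 j i2 j ha hb) hLx
    (fun j => colsum_le W j)
  -- identify sums of squares with ip
  have hq1 : (∑ i : Fin n1, ∑ j : Fin n2, (Z i j - Y i j) ^ 2) = ip (Z - Y) (Z - Y) := by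
    unfold ip
    refine Finset.sum_congr rfl fun i _ => Finset.sum_congr rfl fun j _ => ?_
    simp [Matrix.sub_apply]; ring
  have hq2 : (∑ j : Fin n2, ∑ i : Fin n1, (Z i j - Y i j) ^ 2) = ip (Z - Y) (Z - Y) := by
    rw [← hq1]; exact Finset.sum_comm
  rw [hq1] at hqr
  rw [hq2] at hqc
  rw [lossL_eq X W Y, lossL_eq X W Z, ip_gradL]
  have hsub : ∀ (i : Fin n1) (j : Fin n2), (Z - Y) i j = Z i j - Y i j := by
    intro i j; simp [Matrix.sub_apply]
  have e1 : NMCAux.rpair (fun i j => X i j) (fun i j => W i j) (fun i j => Y i j)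
      (fun i j => (Z - Y) i j)
      = NMCAux.rpair (fun i j => X i j) (fun i j => W i j) (fun i j => Y i j)
        (fun i j => Z i j - Y i j) := rfl
  have e2 : NMCAux.rpair (fun j i => X i j) (fun j i => W i j) (fun j i => Y i j)
      (fun j i => (Z - Y) i j)
      = NMCAux.rpair (fun j i => X i j) (fun j i => W i j) (fun j i => Y i j)
        (fun j i => Z i j - Y i j) := rfl
  rw [e1, e2]
  have c1 : (0:ℝ) ≤ 1 / (n2 : ℝ) := by positivity
  have c2 : (0:ℝ) ≤ 1 / (n1 : ℝ) := by positivity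
  have comb : (1 / (n2 : ℝ)) * (Lx X W / 4 * R * ip (Z - Y) (Z - Y))
      + (1 / (n1 : ℝ)) * (Lx X W / 4 * C * ip (Z - Y) (Z - Y))
      = Lf X W / 2 * ip (Z - Y) (Z - Y) := by
    unfold Lf Lw
    rw [← hRdef, ← hCdef]
    ring
  nlinarith [mul_le_mul_of_nonneg_left hdr c1, mul_le_mul_of_nonneg_left hdc c2,
    mul_le_mul_of_nonneg_left hqr c1, mul_le_mul_of_nonneg_left hqc c2]

lemma infNorm_le_iff (hn1 : 0 < n1) (hn2 : 0 < n2) (A : Mat n1 n2) (r : ℝ) :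
    infNorm A ≤ r ↔ ∀ i j, |A i j| ≤ r := by
  unfold infNorm
  constructor
  · intro h i j
    exact le_trans (le_csSup (Set.Finite.bddAbove (Set.finite_range _)) ⟨(i, j), rfl⟩) h
  · intro h
    haveI : Nonempty (Fin n1 × Fin n2) := ⟨(⟨0, hn1⟩, ⟨0, hn2⟩)⟩
    refine csSup_le (Set.range_nonempty _) ?_
    rintro x ⟨p, rfl⟩
    exact h p.1 p.2

lemma prox_vi (hn1 : 0 < n1) (hn2 : 0 < n2) {lam al : ℝ} (hal : 0 < al) (hlam : 0 ≤ lam)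
    {A P : Mat n1 n2} (hP : IsProx lam al A P)
    (Z : Mat n1 n2) (hZ : infNorm Z ≤ al) :
    0 ≤ ip (P - A) (Z - P) + lam * (nuclNorm Z - nuclNorm P) := by
  by_contra hneg
  push_neg at hneg
  set K := ip (P - A) (Z - P) + lam * (nuclNorm Z - nuclNorm P) with hK
  set c := ip (Z - P) (Z - P) with hc
  have hcnn : 0 ≤ c := ip_nonneg_self _
  set t := min 1 (-K / (c + 1)) with ht
  have ht0 : 0 < t := lt_min one_pos (div_pos (by linarith) (by linarith))
  have ht1 : t ≤ 1 := min_le_left _ _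
  have ht2 : t * (c + 1) ≤ -K := by
    have h := min_le_right 1 (-K / (c + 1))
    have hpos : (0:ℝ) < c + 1 := by linarith
    calc t * (c + 1) ≤ (-K / (c + 1)) * (c + 1) := mul_le_mul_of_nonneg_right h hpos.le
      _ = -K := by field_simp
  -- feasibility of the combination
  have hfeas : infNorm (P + t • (Z - P)) ≤ al := by
    rw [infNorm_le_iff hn1 hn2]
    intro i j
    have hP1 := (infNorm_le_iff hn1 hn2 P al).mp hP.1 i j
    have hZ1 := (infNorm_le_iff hn1 hn2 Z al).mp hZ i j
    have : (P + t • (Z - P)) i j = (1 - t) * P i j + t * Z i j := by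
      simp only [Matrix.add_apply, Matrix.smul_apply, Matrix.sub_apply, smul_eq_mul]
      ring
    rw [this]
    calc |(1 - t) * P i j + t * Z i j| ≤ |(1 - t) * P i j| + |t * Z i j| := abs_add_le _ _
      _ = (1 - t) * |P i j| + t * |Z i j| := by
          rw [abs_mul, abs_mul, abs_of_nonneg (by linarith : (0:ℝ) ≤ 1 - t),
            abs_of_nonneg ht0.le]
      _ ≤ (1 - t) * al + t * al := by
          have h1t : (0:ℝ) ≤ 1 - t := by linarith
          nlinarith
      _ = al := by ring
  have hobj := hP.2 _ hfeas
  unfold proxObj at hobj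
  rw [frob_sq, frob_sq, ip_prox_expand] at hobj
  have hnucl := nucl_combo P Z ht0.le ht1
  -- hobj : 1/2 * ipPA + lam * nucl P ≤ 1/2 * (ipPA + 2t ip(P-A)(Z-P) + t² c) + lam * nucl(comb)
  have hfin : 0 ≤ t * ip (P - A) (Z - P) + t ^ 2 / 2 * c
      + lam * (t * (nuclNorm Z - nuclNorm P)) := by
    nlinarith [hobj, mul_le_mul_of_nonneg_left hnucl hlam]
  have hKneg : K < 0 := hneg
  have h5 : t * (t * (c + 1)) ≤ t * (-K) := mul_le_mul_of_nonneg_left ht2 ht0.le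
  nlinarith [hfin, h5, mul_pos ht0 ht0, ht0, hcnn]

lemma core_step (X W : Mat n1 n2) (hn1 : 0 < n1) (hn2 : 0 < n2)
    (hW01 : ∀ i j, W i j = 0 ∨ W i j = 1) (hWnz : ∃ i j, W i j = 1)
    {lam al mu : ℝ} (hal : 0 < al) (hlam : 0 < lam) (hmu : Lf X W < mu)
    (Y P Z : Mat n1 n2)
    (hprox : IsProx (lam / mu) al (Y - mu⁻¹ • gradL X W Y) P)
    (hZ : infNorm Z ≤ al) :
    mu / 2 * (ip (P - Z) (P - Z) - ip (Y - Z) (Y - Z))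
      ≤ objF X W lam Z - objF X W lam P := by
  have hmu0 : 0 < mu := lt_of_le_of_lt (Lf_nonneg X W hn1 hn2 hW01) hmu
  set G := gradL X W Y with hG
  have hvi := prox_vi hn1 hn2 hal (by positivity : (0:ℝ) ≤ lam / mu) hprox Z hZ
  rw [ip_grad_split P Y G mu⁻¹ (Z - P)] at hvi
  -- multiply by mu
  have hvi2 : 0 ≤ mu * ip (P - Y) (Z - P) + ip G (Z - P)
      + lam * (nuclNorm Z - nuclNorm P) := by
    have := mul_le_mul_of_nonneg_left hvi hmu0.le
    have hinv : mu * (mu⁻¹ * ip G (Z - P)) = ip G (Z - P) := by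
      field_simp
    have hlm : mu * (lam / mu * (nuclNorm Z - nuclNorm P))
        = lam * (nuclNorm Z - nuclNorm P) := by
      field_simp
    nlinarith [this]
  have hlow := lossL_lower X W hW01 Y Z
  have hup := lossL_upper X W hn1 hn2 hW01 hWnz Y P
  have hsplit := ip_sub_expand G Z Y P
  have hid := ip_sq_identity P Y Z
  have hmuLe : Lf X W / 2 * ip (P - Y) (P - Y) ≤ mu / 2 * ip (P - Y) (P - Y) := by
    have := ip_nonneg_self (P - Y)
    nlinarith
  have hup2 : lossL X W P ≤ lossL X W Y + ip G (P - Y) + mu / 2 * ip (P - Y) (P - Y) := by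
    linarith [hup, hmuLe]
  have hid2 : mu / 2 * ip (Y - Z) (Y - Z)
      = mu / 2 * ip (P - Z) (P - Z) + mu / 2 * ip (P - Y) (P - Y)
        + mu * ip (P - Y) (Z - P) := by
    rw [hid]; ring
  unfold objF
  nlinarith [hvi2, hlow, hup2, hsplit, hid2]

end AuxDev

theorem statement1 (n1 n2 : ℕ) (hn1 : 0 < n1) (hn2 : 0 < n2)
    (al lam : ℝ) (hal : 0 < al) (hlam : 0 < lam)
    (X W : Mat n1 n2) (hW01 : ∀ i j, W i j = 0 ∨ W i j = 1)
    (hWnz : ∃ i j, W i j = 1)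
    (mu : ℝ) (hmu : Lf X W < mu)
    (M : ℕ → Mat n1 n2) (hM0 : infNorm (M 0) ≤ al)
    (hiter : ∀ k : ℕ, IsProx (lam / mu) al (M k - mu⁻¹ • gradL X W (M k)) (M (k + 1)))
    (F : ℕ → ℝ) (hF : ∀ k, F k = objF X W lam (M k))
    (Mhat : Mat n1 n2) (hmin : IsMin X W lam al Mhat) :
    (∀ Mbar : Mat n1 n2, MapClusterPt Mbar Filter.atTop M → IsMin X W lam al Mbar) ∧
    ∀ k : ℕ, 1 ≤ k →
      F k - objF X W lam Mhat ≤ mu * frobNorm (M 0 - Mhat) ^ 2 / (2 * (k : ℝ)) := by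
  classical
  have hmu0 : 0 < mu := lt_of_le_of_lt (Lf_nonneg X W hn1 hn2 hW01) hmu
  have feas : ∀ k, infNorm (M k) ≤ al := by
    intro k
    cases k with
    | zero => exact hM0
    | succ k => exact (hiter k).1
  have step : ∀ (k : ℕ) (Z : Mat n1 n2), infNorm Z ≤ al →
      mu / 2 * (ip (M (k+1) - Z) (M (k+1) - Z) - ip (M k - Z) (M k - Z))
        ≤ objF X W lam Z - objF X W lam (M (k+1)) := by
    intro k Z hZ
    exact core_step X W hn1 hn2 hW01 hWnz hal hlam hmu (M k) (M (k+1)) Z (hiter k) hZ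
  set Fstar := objF X W lam Mhat with hFstar
  have hFge : ∀ k, Fstar ≤ objF X W lam (M k) := fun k => hmin.2 (M k) (feas k)
  have dec : ∀ k, objF X W lam (M (k+1)) ≤ objF X W lam (M k) := by
    intro k
    have h := step k (M k) (feas k)
    have h0 : ip (M k - M k) (M k - M k) = 0 := ip_self_zero _
    have hq := ip_nonneg_self (M (k+1) - M k)
    rw [h0] at h
    have hnn : 0 ≤ mu / 2 * ip (M (k+1) - M k) (M (k+1) - M k) :=
      mul_nonneg (by linarith) hq
    nlinarith
  have mono : Antitone fun k => objF X W lam (M k) := antitone_nat_of_succ_le dec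
  have tele : ∀ K : ℕ, (∑ k ∈ Finset.range K, (objF X W lam (M (k+1)) - Fstar))
      ≤ mu / 2 * ip (M 0 - Mhat) (M 0 - Mhat) := by
    intro K
    have h1 : ∀ k, objF X W lam (M (k+1)) - Fstar
        ≤ mu / 2 * (ip (M k - Mhat) (M k - Mhat)
            - ip (M (k+1) - Mhat) (M (k+1) - Mhat)) := by
      intro k
      have h := step k Mhat hmin.1
      nlinarith [h]
    calc (∑ k ∈ Finset.range K, (objF X W lam (M (k+1)) - Fstar))
        ≤ ∑ k ∈ Finset.range K, mu / 2 * (ip (M k - Mhat) (M k - Mhat)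
            - ip (M (k+1) - Mhat) (M (k+1) - Mhat)) :=
          Finset.sum_le_sum fun k _ => h1 k
      _ = mu / 2 * (ip (M 0 - Mhat) (M 0 - Mhat) - ip (M K - Mhat) (M K - Mhat)) := by
          rw [← Finset.mul_sum, Finset.sum_range_sub' (fun k => ip (M k - Mhat) (M k - Mhat))]
      _ ≤ mu / 2 * ip (M 0 - Mhat) (M 0 - Mhat) := by
          nlinarith [ip_nonneg_self (M K - Mhat)]
  have rate : ∀ k : ℕ, 1 ≤ k → objF X W lam (M k) - Fstar
      ≤ mu * frobNorm (M 0 - Mhat) ^ 2 / (2 * (k:ℝ)) := by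
    intro k hk
    have hsum := tele k
    have hlb : (k:ℝ) * (objF X W lam (M k) - Fstar)
        ≤ ∑ i ∈ Finset.range k, (objF X W lam (M (i+1)) - Fstar) := by
      have hterm : ∀ i ∈ Finset.range k, objF X W lam (M k) - Fstar
          ≤ objF X W lam (M (i+1)) - Fstar := by
        intro i hi
        have hik : i + 1 ≤ k := Finset.mem_range.mp hi
        have := mono hik
        simp only at this
        linarith
      calc (k:ℝ) * (objF X W lam (M k) - Fstar)
          = ∑ _i ∈ Finset.range k, (objF X W lam (M k) - Fstar) := by
            rw [Finset.sum_const, Finset.card_range, nsmul_eq_mul]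
        _ ≤ ∑ i ∈ Finset.range k, (objF X W lam (M (i+1)) - Fstar) :=
            Finset.sum_le_sum hterm
    rw [frob_sq]
    have hk0 : (0:ℝ) < (k:ℝ) := by
      have : 0 < k := hk
      exact_mod_cast this
    rw [le_div_iff₀ (by linarith : (0:ℝ) < 2 * (k:ℝ))]
    nlinarith [hlb, hsum]
  constructor
  · intro Mbar hMb
    haveI : FirstCountableTopology (Mat n1 n2) :=
      inferInstanceAs (FirstCountableTopology (Fin n1 → Fin n2 → ℝ))
    obtain ⟨ψ, hψ, htend⟩ := TopologicalSpace.FirstCountableTopology.tendsto_subseq hMb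
    have hcont : Continuous (objF X W lam) := by
      unfold objF
      exact (lossL_cont X W).add (continuous_const.mul nucl_cont)
    have hF2 : Filter.Tendsto (fun k => objF X W lam (M k)) Filter.atTop (nhds Fstar) := by
      have hub : ∀ᶠ k in Filter.atTop, objF X W lam (M k)
          ≤ Fstar + mu * frobNorm (M 0 - Mhat) ^ 2 / (2 * (k:ℝ)) := by
        filter_upwards [Filter.eventually_ge_atTop 1] with k hk
        linarith [rate k hk]
      have hlb2 : ∀ᶠ k in Filter.atTop, Fstar ≤ objF X W lam (M k) :=
        Filter.Eventually.of_forall hFge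
      have hupper : Filter.Tendsto
          (fun k : ℕ => Fstar + mu * frobNorm (M 0 - Mhat) ^ 2 / (2 * (k:ℝ)))
          Filter.atTop (nhds (Fstar + 0)) := by
        apply Filter.Tendsto.const_add
        have h := tendsto_const_div_atTop_nhds_zero_nat (mu * frobNorm (M 0 - Mhat) ^ 2 / 2)
        have heq : (fun k : ℕ => mu * frobNorm (M 0 - Mhat) ^ 2 / 2 / (k:ℝ))
            = fun k : ℕ => mu * frobNorm (M 0 - Mhat) ^ 2 / (2 * (k:ℝ)) := by
          funext k
          rw [div_div]
        rwa [heq] at h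
      rw [add_zero] at hupper
      exact tendsto_of_tendsto_of_tendsto_of_le_of_le' tendsto_const_nhds hupper hlb2 hub
    have hF1 : Filter.Tendsto (fun n => objF X W lam (M (ψ n))) Filter.atTop
        (nhds (objF X W lam Mbar)) := (hcont.tendsto Mbar).comp htend
    have hF3 : Filter.Tendsto (fun n => objF X W lam (M (ψ n))) Filter.atTop
        (nhds Fstar) := hF2.comp hψ.tendsto_atTop
    have hEq : objF X W lam Mbar = Fstar := tendsto_nhds_unique hF1 hF3
    refine ⟨?_, ?_⟩
    · rw [infNorm_le_iff hn1 hn2]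
      intro i j
      have h1 : Continuous fun A : Mat n1 n2 => A i j := by
        have he : (fun A : Mat n1 n2 => A i j)
            = (fun g : Fin n2 → ℝ => g j) ∘ (fun A : Mat n1 n2 => A i) := rfl
        rw [he]
        exact (continuous_apply j).comp (continuous_apply i)
      have hev : Filter.Tendsto (fun n => M (ψ n) i j) Filter.atTop (nhds (Mbar i j)) :=
        (h1.tendsto Mbar).comp htend
      have habs : Filter.Tendsto (fun n => |M (ψ n) i j|) Filter.atTop
          (nhds |Mbar i j|) := hev.abs
      exact le_of_tendsto habs (Filter.Eventually.of_forall fun n =>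
        (infNorm_le_iff hn1 hn2 _ al).mp (feas (ψ n)) i j)
    · intro Mz hMz
      rw [hEq]
      exact hmin.2 Mz hMz
  · intro k hk
    rw [hF k]
    exact rate k hk


end NMC
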